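/- For even n ≥ 8, the permutations x = (1 2 … n−1) and y = (1 n)(2 3) generate the alternating group A_n. -/

import Mathlib

open Equiv Equiv.Perm Subgroup List

private theorem aux_x_apply (n : ℕ) (hn : 8 ≤ n) (i : ℕ) (h : i < n - 1)
    (h1 : i < n) (h2 : (i+1) % (n-1) < n) :
    ((List.finRange n).take (n-1)).formPerm ⟨i, h1⟩ = ⟨(i+1) % (n-1), h2⟩ := by
  have hlen : ((List.finRange n).take (n-1)).length = n-1 := by
    simp [List.length_take, List.length_finRange]
  have hnd : ((List.finRange n).take (n-1)).Nodup :=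
    (List.take_sublist _ _).nodup (List.nodup_finRange n)
  have hget : ∀ j (hj : j < n-1), ((List.finRange n).take (n-1))[j]'(by rw [hlen]; omega)
      = (⟨j, by omega⟩ : Fin n) := by
    intro j hj
    simp [List.getElem_take, List.getElem_finRange]
  rw [show (⟨i, h1⟩ : Fin n) = ⟨i, by omega⟩ from rfl,
    ← hget i h, List.formPerm_apply_getElem _ hnd i (by rw [hlen]; omega)]
  simp only [hlen]
  rw [hget ((i+1) % (n-1)) (Nat.mod_lt _ (by omega))]

private theorem aux_x_fix (n : ℕ) (hn : 8 ≤ n) (h1 : n - 1 < n) :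
    ((List.finRange n).take (n-1)).formPerm ⟨n-1, h1⟩ = ⟨n-1, h1⟩ := by
  apply List.formPerm_apply_of_notMem
  intro hmem
  obtain ⟨j, hj, hje⟩ := List.mem_take_iff_getElem.mp hmem
  have hj' : j < n - 1 := by
    simp [List.length_finRange] at hj; omega
  rw [List.getElem_finRange] at hje
  have := congrArg Fin.val hje
  simp at this
  omega

private theorem aux_pow_apply (n : ℕ) (hn : 8 ≤ n) (k : ℕ) :
    ∀ (i : ℕ), i < n - 1 → ∀ (h1 : i < n) (h2 : (i+k) % (n-1) < n),
      (((List.finRange n).take (n-1)).formPerm ^ k) ⟨i, h1⟩ = ⟨(i+k) % (n-1), h2⟩ := by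
  induction k with
  | zero =>
    intro i h h1 h2
    simp only [pow_zero, Equiv.Perm.one_apply]
    exact Fin.ext (by simp [Nat.mod_eq_of_lt h])
  | succ k ih =>
    intro i h h1 h2
    rw [pow_succ', Equiv.Perm.mul_apply,
      ih i h h1 (lt_of_lt_of_le (Nat.mod_lt _ (by omega)) (by omega)),
      aux_x_apply n hn ((i+k) % (n-1)) (Nat.mod_lt _ (by omega)) _
        (lt_of_lt_of_le (Nat.mod_lt _ (by omega)) (by omega))]
    exact Fin.ext (by
      show ((i+k) % (n-1) + 1) % (n-1) = (i + (k+1)) % (n-1)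
      rw [Nat.mod_add_mod]
      congr 1)

private theorem aux_pow_fix (n : ℕ) (hn : 8 ≤ n) (k : ℕ) (h1 : n - 1 < n) :
    (((List.finRange n).take (n-1)).formPerm ^ k) ⟨n-1, h1⟩ = ⟨n-1, h1⟩ := by
  induction k with
  | zero => simp
  | succ k ih =>
    rw [pow_succ', Equiv.Perm.mul_apply, ih, aux_x_fix n hn h1]

private def emb7 (n : ℕ) (hn : 8 ≤ n) : Fin 7 ↪ Fin n where
  toFun a := ⟨if (a : ℕ) = 6 then n - 1 else (a : ℕ), by
    have := a.isLt; split <;> omega⟩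
  inj' := by
    intro a b hab
    rw [Fin.ext_iff] at hab ⊢
    have ha := a.isLt; have hb := b.isLt
    simp only at hab
    split_ifs at hab <;> omega

private theorem emb7_swap (n : ℕ) (hn : 8 ≤ n) (a b : Fin 7) :
    Equiv.Perm.viaEmbeddingHom (emb7 n hn) (Equiv.swap a b)
      = Equiv.swap (emb7 n hn a) (emb7 n hn b) := by
  ext c
  rw [Equiv.Perm.viaEmbeddingHom_apply]
  by_cases hc : c ∈ Set.range (emb7 n hn)
  · obtain ⟨d, rfl⟩ := hc
    rw [Equiv.Perm.viaEmbedding_apply]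
    rw [(emb7 n hn).injective.swap_apply]
  · rw [Equiv.Perm.viaEmbedding_apply_of_notMem _ _ _ hc]
    rw [Equiv.swap_apply_of_ne_of_ne (fun h => hc ⟨a, h.symm⟩) (fun h => hc ⟨b, h.symm⟩)]

private theorem main_aux (n : ℕ) (hn : 8 ≤ n) (heven : Even n)
    (p0 : (0:ℕ) < n) (pn1 : n - 1 < n) (p1 : 1 < n) (p2 : 2 < n) :
    Subgroup.closure
        ({((List.finRange n).take (n - 1)).formPerm,
          Equiv.swap (⟨0, p0⟩ : Fin n) ⟨n - 1, pn1⟩ *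
            Equiv.swap (⟨1, p1⟩ : Fin n) ⟨2, p2⟩} :
          Set (Equiv.Perm (Fin n))) =
      alternatingGroup (Fin n) := by
  set x : Equiv.Perm (Fin n) := ((List.finRange n).take (n - 1)).formPerm with hxdef
  set y : Equiv.Perm (Fin n) :=
    Equiv.swap (⟨0, p0⟩ : Fin n) ⟨n - 1, pn1⟩ * Equiv.swap (⟨1, p1⟩ : Fin n) ⟨2, p2⟩ with hydef
  set G := Subgroup.closure ({x, y} : Set (Equiv.Perm (Fin n))) with hGdef
  have hxG : x ∈ G := Subgroup.subset_closure (Set.mem_insert _ _)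
  have hyG : y ∈ G := Subgroup.subset_closure (Set.mem_insert_of_mem _ rfl)
  -- x evaluation helpers
  have hxval : ∀ (i : ℕ), i + 1 < n - 1 → ∀ (h1 : i < n) (h2 : i+1 < n),
      x ⟨i, h1⟩ = ⟨i+1, h2⟩ := by
    intro i h h1 h2
    rw [hxdef, aux_x_apply n hn i (by omega) h1 (lt_of_lt_of_le (Nat.mod_lt _ (by omega)) (by omega))]
    exact Fin.ext (Nat.mod_eq_of_lt (by omega))
  have hxpval : ∀ (k i : ℕ), i + k < n - 1 → ∀ (h1 : i < n) (h2 : i+k < n),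
      (x^k) ⟨i, h1⟩ = ⟨i+k, h2⟩ := by
    intro k i h h1 h2
    rw [hxdef, aux_pow_apply n hn k i (by omega) h1
      (lt_of_lt_of_le (Nat.mod_lt _ (by omega)) (by omega))]
    exact Fin.ext (Nat.mod_eq_of_lt (by omega))
  have hxpwrap : ∀ (k i j : ℕ), i < n - 1 → j < n - 1 → i + k = j + (n-1) →
      ∀ (h1 : i < n) (h2 : j < n), (x^k) ⟨i, h1⟩ = ⟨j, h2⟩ := by
    intro k i j hi hj he h1 h2
    rw [hxdef, aux_pow_apply n hn k i (by omega) h1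
      (lt_of_lt_of_le (Nat.mod_lt _ (by omega)) (by omega))]
    refine Fin.ext ?_
    show (i + k) % (n-1) = j
    rw [he, Nat.add_mod_right, Nat.mod_eq_of_lt hj]
  -- y evaluation helpers
  have hy0 : ∀ (h1 : (0:ℕ) < n) (h2 : n-1 < n), y ⟨0, h1⟩ = ⟨n-1, h2⟩ := by
    intro h1 h2
    rw [hydef, Equiv.Perm.mul_apply,
      Equiv.swap_apply_of_ne_of_ne
        (show (⟨0,h1⟩ : Fin n) ≠ ⟨1,p1⟩ by simp [Fin.ext_iff])
        (show (⟨0,h1⟩ : Fin n) ≠ ⟨2,p2⟩ by simp [Fin.ext_iff]),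
      Equiv.swap_apply_left]
  have hy1 : ∀ (h1 : (1:ℕ) < n) (h2 : (2:ℕ) < n), y ⟨1, h1⟩ = ⟨2, h2⟩ := by
    intro h1 h2
    rw [hydef, Equiv.Perm.mul_apply, Equiv.swap_apply_left,
      Equiv.swap_apply_of_ne_of_ne
        (show (⟨2,p2⟩ : Fin n) ≠ ⟨0,p0⟩ by simp [Fin.ext_iff])
        (show (⟨2,p2⟩ : Fin n) ≠ ⟨n-1,pn1⟩ by simp [Fin.ext_iff]; omega)]
  -- the embedding and transport
  set φ := Equiv.Perm.viaEmbeddingHom (emb7 n hn) with hφdef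
  have e : ∀ (a : Fin 7) (v : ℕ), (a:ℕ) = v → v < 6 → ∀ (h' : v < n), emb7 n hn a = ⟨v, h'⟩ := by
    intro a v hv hv6 h'
    apply Fin.ext
    show (if (a:ℕ) = 6 then n - 1 else (a:ℕ)) = v
    rw [if_neg (by omega)]
    exact hv
  have e6 : ∀ (h' : n-1 < n), emb7 n hn (6:Fin 7) = ⟨n-1, h'⟩ := by
    intro h'
    apply Fin.ext
    show (if ((6:Fin 7):ℕ) = 6 then n - 1 else ((6:Fin 7):ℕ)) = n - 1
    rw [if_pos (by decide)]
  have hφswap : ∀ (a b : Fin 7) (a' b' : Fin n), emb7 n hn a = a' → emb7 n hn b = b' →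
      φ (Equiv.swap a b) = Equiv.swap a' b' := by
    rintro a b a' b' rfl rfl
    exact emb7_swap n hn a b
  have hyφ : y = φ (Equiv.swap 0 6 * Equiv.swap 1 2) := by
    rw [map_mul, hφswap 0 6 _ _ (e 0 0 (by decide) (by decide) (by omega)) (e6 (by omega)),
      hφswap 1 2 _ _ (e 1 1 (by decide) (by decide) (by omega)) (e 2 2 (by decide) (by decide) (by omega)), hydef]
  -- conjugation of swaps
  have hconjswap : ∀ (g : Equiv.Perm (Fin n)) (a b : Fin n),
      g * Equiv.swap a b * g⁻¹ = Equiv.swap (g a) (g b) :=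
    fun g a b => (Equiv.swap_apply_apply g a b).symm
  have expand : ∀ (g s1 s2 : Equiv.Perm (Fin n)),
      g * (s1 * s2) * g⁻¹ = (g * s1 * g⁻¹) * (g * s2 * g⁻¹) := by
    intro g s1 s2; group
  -- conjugates of y
  have hY1 : x * y * x⁻¹ = Equiv.swap (⟨1, by omega⟩ : Fin n) ⟨n-1, by omega⟩ *
      Equiv.swap (⟨2, by omega⟩ : Fin n) ⟨3, by omega⟩ := by
    rw [hydef, expand, hconjswap, hconjswap,
      hxval 0 (by omega) _ (by omega), hxval 1 (by omega) _ (by omega),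
      hxval 2 (by omega) _ (by omega)]
    rw [show x ⟨n-1, pn1⟩ = ⟨n-1, pn1⟩ from aux_x_fix n hn pn1]
  have hY3 : x^3 * y * (x^3)⁻¹ = Equiv.swap (⟨3, by omega⟩ : Fin n) ⟨n-1, by omega⟩ *
      Equiv.swap (⟨4, by omega⟩ : Fin n) ⟨5, by omega⟩ := by
    rw [hydef, expand, hconjswap, hconjswap,
      hxpval 3 0 (by omega) _ (by omega), hxpval 3 1 (by omega) _ (by omega),
      hxpval 3 2 (by omega) _ (by omega)]
    rw [show (x^3) ⟨n-1, pn1⟩ = ⟨n-1, pn1⟩ from aux_pow_fix n hn 3 pn1]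
  set Y1 : Equiv.Perm (Fin n) := Equiv.swap (⟨1, by omega⟩ : Fin n) ⟨n-1, by omega⟩ *
      Equiv.swap (⟨2, by omega⟩ : Fin n) ⟨3, by omega⟩ with hY1def
  set Y3 : Equiv.Perm (Fin n) := Equiv.swap (⟨3, by omega⟩ : Fin n) ⟨n-1, by omega⟩ *
      Equiv.swap (⟨4, by omega⟩ : Fin n) ⟨5, by omega⟩ with hY3def
  have hY1G : Y1 ∈ G := by rw [← hY1]; exact mul_mem (mul_mem hxG hyG) (inv_mem hxG)
  have hY3G : Y3 ∈ G := by
    rw [← hY3]; exact mul_mem (mul_mem (pow_mem hxG 3) hyG) (inv_mem (pow_mem hxG 3))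
  have hY1φ : Y1 = φ (Equiv.swap 1 6 * Equiv.swap 2 3) := by
    rw [map_mul, hφswap 1 6 _ _ (e 1 1 (by decide) (by decide) (by omega)) (e6 (by omega)),
      hφswap 2 3 _ _ (e 2 2 (by decide) (by decide) (by omega)) (e 3 3 (by decide) (by decide) (by omega)), hY1def]
  have hY3φ : Y3 = φ (Equiv.swap 3 6 * Equiv.swap 4 5) := by
    rw [map_mul, hφswap 3 6 _ _ (e 3 3 (by decide) (by decide) (by omega)) (e6 (by omega)),
      hφswap 4 5 _ _ (e 4 4 (by decide) (by decide) (by omega)) (e 5 5 (by decide) (by decide) (by omega)), hY3def]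
  -- the key 3-cycle-ish element
  have hu : Y3 * Y1 * Y3 * y * Y1 = Equiv.swap (⟨0, by omega⟩ : Fin n) ⟨1, by omega⟩ *
      Equiv.swap (⟨0, by omega⟩ : Fin n) ⟨2, by omega⟩ := by
    rw [hY1φ, hY3φ, hyφ, ← map_mul, ← map_mul, ← map_mul, ← map_mul,
      show (Equiv.swap (3:Fin 7) 6 * Equiv.swap 4 5) * (Equiv.swap 1 6 * Equiv.swap 2 3) *
        (Equiv.swap 3 6 * Equiv.swap 4 5) * (Equiv.swap 0 6 * Equiv.swap 1 2) *
        (Equiv.swap 1 6 * Equiv.swap 2 3)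
        = Equiv.swap 0 1 * Equiv.swap 0 2 from by decide,
      map_mul, hφswap 0 1 _ _ (e 0 0 (by decide) (by decide) (by omega)) (e 1 1 (by decide) (by decide) (by omega)),
      hφswap 0 2 _ _ (e 0 0 (by decide) (by decide) (by omega)) (e 2 2 (by decide) (by decide) (by omega))]
  have huG : Y3 * Y1 * Y3 * y * Y1 ∈ G :=
    mul_mem (mul_mem (mul_mem (mul_mem hY3G hY1G) hY3G) hyG) hY1G
  -- c = swap 3 4 * swap 3 5 ∈ G
  have hcG : Equiv.swap (⟨3, by omega⟩ : Fin n) ⟨4, by omega⟩ *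
      Equiv.swap (⟨3, by omega⟩ : Fin n) ⟨5, by omega⟩ ∈ G := by
    have hconj3 : x^3 * (Y3 * Y1 * Y3 * y * Y1) * (x^3)⁻¹
        = Equiv.swap (⟨3, by omega⟩ : Fin n) ⟨4, by omega⟩ *
          Equiv.swap (⟨3, by omega⟩ : Fin n) ⟨5, by omega⟩ := by
      rw [hu, expand, hconjswap, hconjswap,
        hxpval 3 0 (by omega) _ (by omega), hxpval 3 1 (by omega) _ (by omega),
        hxpval 3 2 (by omega) _ (by omega)]
    rw [← hconj3]
    exact mul_mem (mul_mem (pow_mem hxG 3) huG) (inv_mem (pow_mem hxG 3))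
  -- the odd element s
  set s : Equiv.Perm (Fin n) := Equiv.swap (⟨3, by omega⟩ : Fin n) ⟨4, by omega⟩ with hsdef
  have hsφ : s = φ (Equiv.swap 3 4) :=
    (hφswap 3 4 _ _ (e 3 3 (by decide) (by decide) (by omega)) (e 4 4 (by decide) (by decide) (by omega))).symm
  have hsinv : s⁻¹ = s := Equiv.swap_inv _ _
  -- s conjugates generators into G
  have hsxs : s * x * s⁻¹ ∈ G := by
    have h45 : x * s * x⁻¹ = Equiv.swap (⟨4, by omega⟩ : Fin n) ⟨5, by omega⟩ := by
      rw [hsdef, hconjswap, hxval 3 (by omega) _ (by omega), hxval 4 (by omega) _ (by omega)]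
    have hkey : s * x * s⁻¹ = (s * (x * s * x⁻¹)) * x := by
      rw [hsinv]; group
    have hid2 : s * Equiv.swap (⟨4, by omega⟩ : Fin n) ⟨5, by omega⟩
        = (Equiv.swap (⟨3, by omega⟩ : Fin n) ⟨4, by omega⟩ *
           Equiv.swap (⟨3, by omega⟩ : Fin n) ⟨5, by omega⟩)⁻¹ := by
      rw [hsφ, hφswap 4 5 _ _ (e 4 4 (by decide) (by decide) (by omega)) (e 5 5 (by decide) (by decide) (by omega)) |>.symm,
        hφswap 3 4 _ _ (e 3 3 (by decide) (by decide) (by omega)) (e 4 4 (by decide) (by decide) (by omega)) |>.symm,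
        hφswap 3 5 _ _ (e 3 3 (by decide) (by decide) (by omega)) (e 5 5 (by decide) (by decide) (by omega)) |>.symm,
        ← map_mul, ← map_mul, ← map_inv,
        show Equiv.swap (3:Fin 7) 4 * Equiv.swap 4 5 = (Equiv.swap 3 4 * Equiv.swap 3 5)⁻¹
          from by decide]
    rw [hkey, h45, hid2]
    exact mul_mem (inv_mem hcG) hxG
  have hsys : s * y * s⁻¹ = y := by
    rw [hsφ, hyφ, ← map_inv, ← map_mul, ← map_mul,
      show Equiv.swap (3:Fin 7) 4 * (Equiv.swap 0 6 * Equiv.swap 1 2) * (Equiv.swap 3 4)⁻¹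
        = Equiv.swap 0 6 * Equiv.swap 1 2 from by decide]
  -- conjugation by s preserves G
  have hconj : ∀ g ∈ G, s * g * s⁻¹ ∈ G := by
    intro g hg
    induction hg using Subgroup.closure_induction with
    | mem z hz =>
      rcases hz with rfl | hz
      · exact hsxs
      · rw [Set.mem_singleton_iff] at hz; subst hz; rw [hsys]; exact hyG
    | one => simpa using one_mem G
    | mul a b ha hb pa pb =>
      have : s * (a * b) * s⁻¹ = (s * a * s⁻¹) * (s * b * s⁻¹) := by group
      rw [this]; exact mul_mem pa pb
    | inv a ha pa =>
      have : s * a⁻¹ * s⁻¹ = (s * a * s⁻¹)⁻¹ := by group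
      rw [this]; exact inv_mem pa
  -- the set S of conjugates of s
  set S : Set (Equiv.Perm (Fin n)) := (fun g => g * s * g⁻¹) '' (G : Set (Equiv.Perm (Fin n)))
    with hSdef
  have hSswap : ∀ σ ∈ S, Equiv.Perm.IsSwap σ := by
    rintro σ ⟨g, hg, rfl⟩
    exact ⟨g ⟨3, by omega⟩, g ⟨4, by omega⟩,
      fun h => by simpa [Fin.ext_iff] using g.injective h, by dsimp only; rw [hsdef, hconjswap]⟩
  have hSinv : ∀ σ, σ⁻¹ ∈ S → σ ∈ S := by
    rintro σ ⟨g, hg, hgs⟩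
    refine ⟨g, hg, ?_⟩
    have : (g * s * g⁻¹)⁻¹ = g * s * g⁻¹ := by
      rw [mul_inv_rev, mul_inv_rev, hsinv, inv_inv]; group
    rw [← inv_inv σ, ← hgs, this]
  have hpairS : ∀ a ∈ S, ∀ b ∈ S, a * b ∈ G := by
    rintro a ⟨g, hg, rfl⟩ b ⟨h, hh, rfl⟩
    have key : (g * s * g⁻¹) * (h * s * h⁻¹) = g * (s * (g⁻¹ * h) * s⁻¹) * h⁻¹ := by
      rw [hsinv]; group
    rw [key]
    exact mul_mem (mul_mem hg (hconj _ (mul_mem (inv_mem hg) hh))) (inv_mem hh)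
  -- S-adjacent swaps
  have memS_adj : ∀ (i : ℕ), i + 1 ≤ n - 2 → ∀ (h1 : i < n) (h2 : i+1 < n),
      Equiv.swap (⟨i, h1⟩ : Fin n) ⟨i+1, h2⟩ ∈ S := by
    intro i hi h1 h2
    refine ⟨x^(n-4+i), pow_mem hxG _, ?_⟩
    dsimp only
    rw [hsdef, hconjswap,
      hxpwrap (n-4+i) 3 i (by omega) (by omega) (by omega) _ h1,
      hxpwrap (n-4+i) 4 (i+1) (by omega) (by omega) (by omega) _ h2]
  have memS_special : ∀ (h1 : 2 < n) (h2 : n-1 < n),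
      Equiv.swap (⟨2, h1⟩ : Fin n) ⟨n-1, h2⟩ ∈ S := by
    intro h1 h2
    refine ⟨y * x^(n-4), mul_mem hyG (pow_mem hxG _), ?_⟩
    dsimp only
    rw [hsdef, hconjswap, Equiv.Perm.mul_apply]
    rw [hxpwrap (n-4) 3 0 (by omega) (by omega) (by omega) (by omega) (by omega)]
    rw [hy0 _ (by omega)]
    rw [Equiv.Perm.mul_apply]
    rw [hxpwrap (n-4) 4 1 (by omega) (by omega) (by omega) (by omega) (by omega)]
    rw [hy1 _ (by omega), Equiv.swap_comm]
  -- all swaps are in closure S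
  have chain0 : ∀ (j : ℕ), j ≤ n - 2 → ∀ (h1 : (0:ℕ) < n) (h2 : j < n),
      Equiv.swap (⟨0, h1⟩ : Fin n) ⟨j, h2⟩ ∈ Subgroup.closure S := by
    intro j
    induction j with
    | zero =>
      intro _ h1 h2
      rw [show (⟨0, h2⟩ : Fin n) = ⟨0, h1⟩ from rfl, Equiv.swap_self]
      exact one_mem _
    | succ j ih =>
      intro hj h1 h2
      exact SubmonoidClass.swap_mem_trans _ (ih (by omega) h1 (by omega))
        (Subgroup.subset_closure (memS_adj j (by omega) _ _))
  have chainN : ∀ (h1 : (0:ℕ) < n) (h2 : n-1 < n),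
      Equiv.swap (⟨0, h1⟩ : Fin n) ⟨n-1, h2⟩ ∈ Subgroup.closure S := by
    intro h1 h2
    exact SubmonoidClass.swap_mem_trans _ (chain0 2 (by omega) _ (by omega))
      (Subgroup.subset_closure (memS_special (by omega) h2))
  have h0b : ∀ b : Fin n, Equiv.swap (⟨0, by omega⟩ : Fin n) b ∈ Subgroup.closure S := by
    intro b
    rcases Nat.lt_or_ge b.val (n-1) with hb | hb
    · have := chain0 b.val (by omega) (by omega) b.isLt
      simpa using this
    · have hb' : b = ⟨n-1, by omega⟩ := by
        apply Fin.ext; have := b.isLt; simp; omega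
      rw [hb']; exact chainN _ _
  have allswap : ∀ a b : Fin n, Equiv.swap a b ∈ Subgroup.closure S := by
    intro a b
    exact SubmonoidClass.swap_mem_trans _ (by rw [Equiv.swap_comm]; exact h0b a) (h0b b)
  have htop : Subgroup.closure S = ⊤ := by
    refine le_antisymm le_top ?_
    rw [← Equiv.Perm.closure_isSwap]
    refine (Subgroup.closure_le _).mpr ?_
    rintro σ ⟨a, b, hab, rfl⟩
    exact allswap a b
  -- pair induction
  have pair_ind : ∀ (k : ℕ) (l : List (Equiv.Perm (Fin n))),
      (∀ g ∈ l, g ∈ S) → l.length = k + k → l.prod ∈ G := by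
    intro k
    induction k with
    | zero =>
      intro l _ hl
      rw [List.length_eq_zero_iff] at hl
      subst hl
      simpa using one_mem G
    | succ k ih =>
      intro l hmem hlen
      obtain ⟨a, l', rfl⟩ := List.exists_of_length_succ l (by omega : l.length = (k + k + 1) + 1)
      obtain ⟨b, l'', rfl⟩ := List.exists_of_length_succ l'
        (by simp at hlen; omega : l'.length = (k + k) + 1)
      rw [List.prod_cons, List.prod_cons, ← mul_assoc]
      refine mul_mem (hpairS a (hmem a (by simp)) b (hmem b (by simp))) ?_
      refine ih l'' (fun g hg => hmem g (by simp [hg])) ?_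
      simp at hlen; omega
  -- final assembly
  refine le_antisymm ?_ ?_
  · refine (Subgroup.closure_le _).mpr ?_
    rintro z hz
    rcases hz with rfl | hz
    · -- x is even
      rw [SetLike.mem_coe, Equiv.Perm.mem_alternatingGroup]
      have hlen : ((List.finRange n).take (n-1)).length = n-1 := by
        simp [List.length_take, List.length_finRange]
      have hnd : ((List.finRange n).take (n-1)).Nodup :=
        (List.take_sublist _ _).nodup (List.nodup_finRange n)
      have hcyc : Equiv.Perm.IsCycle x :=
        List.isCycle_formPerm hnd (by rw [hlen]; omega)
      have hsupp : x.support.card = n - 1 := by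
        rw [hxdef, List.support_formPerm_of_nodup _ hnd (fun z hz => by
          apply_fun List.length at hz
          rw [hlen] at hz
          simp at hz
          omega), List.card_toFinset, List.dedup_eq_self.mpr hnd, hlen]
      rw [hcyc.sign, hsupp, Odd.neg_one_pow (Nat.Even.sub_odd (by omega) heven odd_one)]
      simp
    · rw [Set.mem_singleton_iff] at hz; subst hz
      rw [SetLike.mem_coe, Equiv.Perm.mem_alternatingGroup, map_mul,
        Equiv.Perm.sign_swap (by simp [Fin.ext_iff]; omega),
        Equiv.Perm.sign_swap (by simp [Fin.ext_iff])]
      decide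
  · intro σ hσ
    have hσtop : σ ∈ Subgroup.closure S := by rw [htop]; exact Subgroup.mem_top σ
    rw [← Subgroup.mem_toSubmonoid, Subgroup.closure_toSubmonoid] at hσtop
    obtain ⟨l, hlmem, hlprod⟩ := Submonoid.exists_list_of_mem_closure hσtop
    have hlS : ∀ g ∈ l, g ∈ S := by
      intro g hg
      rcases hlmem g hg with h | h
      · exact h
      · exact hSinv g (Set.mem_inv.mp h)
    have hevenl : Even l.length :=
      (Equiv.Perm.prod_list_swap_mem_alternatingGroup_iff_even_length
        (fun g hg => hSswap g (hlS g hg))).mp (hlprod ▸ hσ)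
    obtain ⟨k, hk⟩ := hevenl
    exact hlprod ▸ pair_ind k l hlS (by omega)

/-- For even `n ≥ 8`, the `(n−1)`-cycle `x = (1 2 … n−1)` (fixing `n`) and the double
transposition `y = (1 n)(2 3)` generate the alternating group `A_n`.
(Points are labelled `0,…,n−1`, so `x` cycles `0,…,n−2` and `y = (0, n−1)(1, 2)`.) -/
theorem stmt_10 (n : ℕ) (hn : 8 ≤ n) (heven : Even n) :
    Subgroup.closure
        ({((List.finRange n).take (n - 1)).formPerm,
          Equiv.swap (⟨0, by omega⟩ : Fin n) ⟨n - 1, by omega⟩ *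
            Equiv.swap (⟨1, by omega⟩ : Fin n) ⟨2, by omega⟩} :
          Set (Equiv.Perm (Fin n))) =
      alternatingGroup (Fin n) := by
  exact main_aux n hn heven (by omega) (by omega) (by omega) (by omega)
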